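/- Let Ω ⊂ ℝ be open bounded, q : ℝ × Ω̄ → ℝ be continuous with q(λ*, x̄) = 0 and q(λ, y) > 0 for λ > λ* and all y, where x̄ ∈ Ω. Assume y ↦ q(λ*, y) is C¹ with derivative vanishing at x̄ (so q(λ₁,y) = q(λ₁,x̄) + o(|y − x̄|) near x̄). Let m := min_{x,y ∈ Ω̄} κ(x,y) > 0 for a continuous strictly positive κ. Then for every ε > 0 there exist δ > 0 and λ₁ > λ* such that for all x ∈ Ω: ε · ∫_{B_δ(x̄)∩Ω} κ(x,y) q(λ₁,y)^{-1} dy > 1. -/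

import Mathlib

open MeasureTheory

/-- core estimate of Proposition 4.2: if `q(λ*,x̄) = 0` with vanishing
`y`-derivative at `x̄`, `q(λ,·) > 0` for `λ > λ*`, and `κ ≥ m > 0`, then for every
`ε > 0` there are `δ > 0` and `λ₁ > λ*` with
`ε ∫_{B_δ(x̄) ∩ Ω} κ(x,y) q(λ₁,y)⁻¹ dy > 1` for all `x ∈ Ω`. -/
theorem stmt14 (Ω : Set ℝ) (hΩo : IsOpen Ω) (hΩb : Bornology.IsBounded Ω)
    (xbar lamstar : ℝ) (hx : xbar ∈ Ω)
    (q : ℝ → ℝ → ℝ) (hq : Continuous (fun z : ℝ × ℝ => q z.1 z.2))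
    (hq0 : q lamstar xbar = 0)
    (hqpos : ∀ lam > lamstar, ∀ y ∈ closure Ω, 0 < q lam y)
    (hderiv : HasDerivAt (fun y => q lamstar y) 0 xbar)
    (κ : ℝ → ℝ → ℝ) (hκc : Continuous (fun z : ℝ × ℝ => κ z.1 z.2))
    (m : ℝ) (hm : 0 < m)
    (hκm : ∀ x ∈ closure Ω, ∀ y ∈ closure Ω, m ≤ κ x y) :
    ∀ ε > (0 : ℝ), ∃ δ > (0 : ℝ), ∃ lam₁ > lamstar,
      ∀ x ∈ Ω, 1 < ε * ∫ y in Metric.ball xbar δ ∩ Ω, κ x y * (q lam₁ y)⁻¹ := by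
  intro ε hε
  set c : ℝ := m * ε / 8 with hc
  have hcpos : 0 < c := by positivity
  -- little-o from the derivative
  have hlo := (hasDerivAt_iff_isLittleO.mp hderiv).def hcpos
  simp only [hq0, smul_zero, sub_zero] at hlo
  have hmem : {y : ℝ | ‖q lamstar y‖ ≤ c * ‖y - xbar‖} ∩ Ω ∈ nhds xbar :=
    Filter.inter_mem hlo (hΩo.mem_nhds hx)
  obtain ⟨r, hr, hrsub⟩ := Metric.mem_nhds_iff.mp hmem
  set δ : ℝ := r / 2 with hδ
  have hδpos : 0 < δ := by positivity
  have hball : Metric.closedBall xbar δ ⊆ Metric.ball xbar r :=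
    Metric.closedBall_subset_ball (by linarith)
  have hballΩ : Metric.closedBall xbar δ ⊆ Ω := fun y hy =>
    (hrsub (hball hy)).2
  set M : ℝ := m * ε * δ / 4 with hM
  have hMpos : 0 < M := by positivity
  -- smallness of q lamstar on closed ball
  have hsmall : ∀ y ∈ Metric.closedBall xbar δ, q lamstar y < M := by
    intro y hy
    have h1 : ‖q lamstar y‖ ≤ c * ‖y - xbar‖ := (hrsub (hball hy)).1
    have h2 : ‖y - xbar‖ ≤ δ := by
      rw [Metric.mem_closedBall, Real.dist_eq] at hy
      simpa [Real.norm_eq_abs] using hy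
    have : q lamstar y ≤ c * δ :=
      le_trans (le_trans (le_abs_self _) h1)
        (by nlinarith [norm_nonneg (y - xbar)])
    have : c * δ < M := by rw [hc, hM]; nlinarith
    linarith
  -- choose lam₁ close to lamstar so q lam₁ < M on closed ball
  have hev : ∀ᶠ lam in nhds lamstar, ∀ y ∈ Metric.closedBall xbar δ,
      q lam y < M := by
    apply (isCompact_closedBall xbar δ).eventually_forall_of_forall_eventually
    intro y hy
    have : IsOpen {z : ℝ × ℝ | q z.1 z.2 < M} := isOpen_lt hq continuous_const
    exact this.mem_nhds (by simpa using hsmall y hy)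
  obtain ⟨η, hη, hηP⟩ := Metric.eventually_nhds_iff.mp hev
  refine ⟨δ, hδpos, lamstar + η / 2, by linarith, ?_⟩
  intro x hxΩ
  have hlam1 : lamstar < lamstar + η / 2 := by linarith
  set lam₁ := lamstar + η / 2 with hl1
  have hqM : ∀ y ∈ Metric.closedBall xbar δ, q lam₁ y < M := by
    apply hηP
    rw [Real.dist_eq, hl1]
    rw [show lamstar + η / 2 - lamstar = η / 2 by ring, abs_of_pos (half_pos hη)]
    linarith
  have hqpos' : ∀ y ∈ Metric.closedBall xbar δ, 0 < q lam₁ y := fun y hy =>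
    hqpos lam₁ hlam1 y (subset_closure (hballΩ hy))
  -- the integration set is the ball
  have hset : Metric.ball xbar δ ∩ Ω = Metric.ball xbar δ :=
    Set.inter_eq_left.mpr ((Metric.ball_subset_closedBall).trans hballΩ)
  rw [hset]
  -- integrability on the closed ball
  have hcont : ContinuousOn (fun y => κ x y * (q lam₁ y)⁻¹)
      (Metric.closedBall xbar δ) := by
    apply ContinuousOn.mul
    · exact (hκc.comp (continuous_const.prodMk continuous_id)).continuousOn
    · exact ContinuousOn.inv₀
        ((hq.comp (continuous_const.prodMk continuous_id)).continuousOn)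
        (fun y hy => (hqpos' y hy).ne')
  have hint : IntegrableOn (fun y => κ x y * (q lam₁ y)⁻¹)
      (Metric.ball xbar δ) := by
    exact (hcont.integrableOn_compact (isCompact_closedBall _ _)).mono_set
      Metric.ball_subset_closedBall
  -- lower bound on integrand
  have hlow : ∀ y ∈ Metric.ball xbar δ, m / M ≤ κ x y * (q lam₁ y)⁻¹ := by
    intro y hy
    have hy' := Metric.ball_subset_closedBall hy
    have hκ : m ≤ κ x y :=
      hκm x (subset_closure hxΩ) y (subset_closure (hballΩ hy'))
    have hq1 : 0 < q lam₁ y := hqpos' y hy'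
    have hq2 : q lam₁ y < M := hqM y hy'
    have : M⁻¹ ≤ (q lam₁ y)⁻¹ := inv_anti₀ hq1 hq2.le
    calc m / M ≤ m * M⁻¹ := by rw [div_eq_mul_inv]
      _ ≤ κ x y * (q lam₁ y)⁻¹ := by
          apply mul_le_mul hκ this (by positivity) (le_trans hm.le hκ)
  have hge := setIntegral_ge_of_const_le_real measurableSet_ball
    measure_ball_lt_top.ne hlow hint
  have hvol : (volume (Metric.ball xbar δ)).toReal = 2 * δ := by
    rw [Real.volume_ball, ENNReal.toReal_ofReal (by positivity)]
  rw [measureReal_def, hvol] at hge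
  have hkey : m / M * (2 * δ) = 8 / ε := by
    rw [hM]; field_simp; ring
  rw [hkey] at hge
  have : 8 / ε ≤ ∫ y in Metric.ball xbar δ, κ x y * (q lam₁ y)⁻¹ := hge
  calc (1:ℝ) < ε * (8 / ε) := by rw [mul_div_cancel₀ _ hε.ne']; norm_num
    _ ≤ ε * _ := by apply mul_le_mul_of_nonneg_left this hε.le
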